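/- Let q be a power of an odd prime r, and let n be a positive integer coprime to r. If every irreducible factor of X^n - 1 in F_q[X] has at most 3 nonzero terms, then every prime divisor of n divides q² - 1. -/

import Mathlib

open Polynomial
open scoped IntermediateField

lemma sub_one_dvd_sq_sub_one (q : ℕ) (hq : 1 ≤ q) : q - 1 ∣ q ^ 2 - 1 := by
  obtain ⟨u, rfl⟩ : ∃ u, q = u + 1 := ⟨q - 1, by omega⟩
  refine ⟨u + 2, ?_⟩
  simp only [Nat.add_sub_cancel]
  exact Nat.sub_eq_of_eq_add (by ring)

lemma lemA {F Ω : Type*} [Field F] [Fintype F] [Field Ω] [Algebra F Ω] {p : ℕ}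
    (hp : p.Prime) {β : Ω} (hβ : IsPrimitiveRoot β p) (hint : IsIntegral F β)
    (hd : (minpoly F β).natDegree ≤ 2) : p ∣ Fintype.card F ^ 2 - 1 := by
  haveI := IntermediateField.adjoin.finiteDimensional hint
  haveI : Finite F⟮β⟯ := Module.finite_of_finite F
  haveI : Fintype F⟮β⟯ := Fintype.ofFinite _
  set s := Module.finrank F F⟮β⟯ with hs
  have hsd : s = (minpoly F β).natDegree := IntermediateField.adjoin.finrank hint
  have hs1 : 1 ≤ s := Module.finrank_pos
  have hcard : Fintype.card F⟮β⟯ = Fintype.card F ^ s := Module.card_eq_pow_finrank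
  have hβK : (IntermediateField.AdjoinSimple.gen F β) ^ (Fintype.card F⟮β⟯) =
      IntermediateField.AdjoinSimple.gen F β := FiniteField.pow_card _
  have hβpow : β ^ (Fintype.card F ^ s) = β := by
    have := congrArg (algebraMap F⟮β⟯ Ω) hβK
    simpa [map_pow, hcard] using this
  have hβ0 : β ≠ 0 := by
    intro h
    have := hβ.pow_eq_one
    rw [h, zero_pow hp.pos.ne'] at this
    exact zero_ne_one this
  have hone : β ^ (Fintype.card F ^ s - 1) = 1 := by
    have h1 : 1 ≤ Fintype.card F ^ s := Nat.one_le_pow _ _ Fintype.card_pos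
    have : β ^ (Fintype.card F ^ s - 1) * β = 1 * β := by
      rw [one_mul, ← pow_succ, Nat.sub_add_cancel h1, hβpow]
    exact mul_right_cancel₀ hβ0 this
  have hdvd : p ∣ Fintype.card F ^ s - 1 := (hβ.pow_eq_one_iff_dvd _).mp hone
  have hs2 : s ≤ 2 := hsd ▸ hd
  have : s = 1 ∨ s = 2 := by omega
  rcases this with h | h
  · rw [h, pow_one] at hdvd
    exact hdvd.trans (sub_one_dvd_sq_sub_one _ Fintype.card_pos)
  · rwa [h] at hdvd

lemma minpoly_natDegree_eq {F Ω : Type*} [Field F] [Field Ω] [Algebra F Ω] {x y : Ω}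
    (hx : IsIntegral F x) (hy : IsIntegral F y) (hxy : x ∈ F⟮y⟯) (hyx : y ∈ F⟮x⟯) :
    (minpoly F x).natDegree = (minpoly F y).natDegree := by
  have hadj : F⟮x⟯ = F⟮y⟯ := le_antisymm (IntermediateField.adjoin_simple_le_iff.mpr hxy)
    (IntermediateField.adjoin_simple_le_iff.mpr hyx)
  have h1 := IntermediateField.adjoin.finrank hx
  have h2 := IntermediateField.adjoin.finrank hy
  rw [← h1, ← h2, hadj]

lemma trin_mul_eq {F : Type*} [CommRing F] (a b a₂ b₂ : F) (e t : ℕ) :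
    (X ^ t + C a * X ^ e + C b) * (X ^ t + C a₂ * X ^ e + C b₂) =
    X ^ (2 * t) + C (a + a₂) * X ^ (t + e) + C (b + b₂) * X ^ t
      + C (a * a₂) * X ^ (2 * e) + C (a * b₂ + a₂ * b) * X ^ e + C (b * b₂) := by
  simp only [map_add, map_mul]
  ring

lemma trin_mul_coeff {F : Type*} [CommRing F] (a b a₂ b₂ : F) (e t k : ℕ) :
    ((X ^ t + C a * X ^ e + C b) * (X ^ t + C a₂ * X ^ e + C b₂)).coeff k =
    (if k = 2 * t then 1 else 0) + (if k = t + e then a + a₂ else 0)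
      + (if k = t then b + b₂ else 0) + (if k = 2 * e then a * a₂ else 0)
      + (if k = e then a * b₂ + a₂ * b else 0) + (if k = 0 then b * b₂ else 0) := by
  rw [trin_mul_eq]
  simp only [coeff_add, coeff_C_mul, coeff_X_pow, coeff_C, mul_ite, mul_one, mul_zero]

set_option maxHeartbeats 2000000 in
lemma core (F : Type*) [Field F] [Fintype F]
    (r : ℕ) (hr : r.Prime) (hrodd : r ≠ 2) (hchar : ringChar F = r)
    (p : ℕ) (hp : p.Prime) (hp2 : p ≠ 2) (hpr : p ≠ r)
    (hsp : ∀ g : F[X], Irreducible g → g ∣ (X ^ p - 1 : F[X]) → g.support.card ≤ 3) :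
    p ∣ Fintype.card F ^ 2 - 1 := by
  haveI : CharP F r := hchar ▸ ringChar.charP F
  set Ω := AlgebraicClosure F with hΩ
  haveI : CharP Ω r := charP_of_injective_algebraMap (algebraMap F Ω).injective r
  have h2F : (2 : F) ≠ 0 := by
    have h : ((2:ℕ):F) ≠ 0 := by
      rw [Ne, CharP.cast_eq_zero_iff F r]
      exact fun hdvd => hrodd ((Nat.prime_dvd_prime_iff_eq hr Nat.prime_two).mp hdvd)
    simpa using h
  have hpΩ : ((p : ℕ) : Ω) ≠ 0 := by
    rw [Ne, CharP.cast_eq_zero_iff Ω r]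
    exact fun h => hpr ((Nat.prime_dvd_prime_iff_eq hr hp).mp h).symm
  -- primitive p-th root of unity
  haveI : NeZero ((p : ℕ) : Ω) := ⟨hpΩ⟩
  obtain ⟨α, hα'⟩ := IsAlgClosed.exists_root (cyclotomic p Ω)
    (degree_cyclotomic_pos p Ω hp.pos).ne.symm
  have hα : IsPrimitiveRoot α p := isRoot_cyclotomic_iff.mp hα'
  have hαp : α ^ p = 1 := hα.pow_eq_one
  have hα0 : α ≠ 0 := by
    intro h
    rw [h, zero_pow hp.pos.ne'] at hαp
    exact zero_ne_one hαp
  have hint : IsIntegral F α := by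
    refine ⟨X ^ p - 1, ?_, ?_⟩
    · simpa using monic_X_pow_sub_C (1 : F) hp.pos.ne'
    · simp [hαp]
  set f := minpoly F α with hfdef
  have hfmonic : f.Monic := minpoly.monic hint
  have hfirr : Irreducible f := minpoly.irreducible hint
  have hfdvdp : f ∣ X ^ p - 1 := minpoly.dvd F α (by simp [hαp])
  set t := f.natDegree with htdef
  have ht1 : 1 ≤ t := minpoly.natDegree_pos hint
  have hXp_ne : (X ^ p - 1 : F[X]) ≠ 0 := by
    have := X_pow_sub_C_ne_zero hp.pos (1 : F)
    simpa using this
  -- t + 1 ≤ p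
  have hfne1 : f ≠ X - C 1 := by
    intro h
    have h0 : (Polynomial.aeval α) f = 0 := minpoly.aeval F α
    rw [h] at h0
    simp only [map_sub, aeval_X, aeval_C, map_one] at h0
    have hα1 : α = 1 := by linear_combination h0
    have hd1 : p ∣ 1 := (hα.pow_eq_one_iff_dvd 1).mp (by simp [hα1])
    have := hp.one_lt
    rw [Nat.dvd_one] at hd1
    omega
  have hcop1 : IsCoprime (X - C 1 : F[X]) f :=
    ((irreducible_X_sub_C (1 : F)).coprime_iff_not_dvd).mpr (fun hdvd =>
      hfne1 (eq_of_monic_of_associated hfmonic (monic_X_sub_C 1)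
        ((irreducible_X_sub_C (1:F)).associated_of_dvd hfirr hdvd).symm))
  have htp : t + 1 ≤ p := by
    have hmul : (X - C 1) * f ∣ X ^ p - 1 :=
      hcop1.mul_dvd (dvd_iff_isRoot.mpr (by simp)) hfdvdp
    have hle := natDegree_le_of_dvd hmul hXp_ne
    rw [natDegree_mul (X_sub_C_ne_zero 1) (minpoly.ne_zero hint)] at hle
    have hdX : (X ^ p - 1 : F[X]).natDegree = p := by
      have : (X ^ p - 1 : F[X]) = X ^ p - C 1 := by rw [map_one]
      rw [this, natDegree_X_pow_sub_C]
    rw [natDegree_X_sub_C, hdX] at hle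
    have hbr : (minpoly F α).natDegree = t := by rw [← hfdef]
    omega
  have hfsupp : f.support.card ≤ 3 := hsp f hfirr hfdvdp
  have hb : f.coeff 0 ≠ 0 := by
    intro h
    have hXdvd : (X : F[X]) ∣ f := X_dvd_iff.mpr h
    have hfX : f = X := eq_of_monic_of_associated hfmonic monic_X
      (irreducible_X.associated_of_dvd hfirr hXdvd).symm
    have h0 : (Polynomial.aeval α) f = 0 := minpoly.aeval F α
    rw [hfX, aeval_X] at h0
    exact hα0 h0
  have ht_mem : t ∈ f.support := by
    rw [mem_support_iff, hfmonic.coeff_natDegree]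
    exact one_ne_zero
  have h0_mem : 0 ∈ f.support := mem_support_iff.mpr hb
  by_cases hbin : f.support.card ≤ 2
  · -- binomial case
    have hsub : ({0, t} : Finset ℕ) ⊆ f.support := by
      intro x hx
      simp only [Finset.mem_insert, Finset.mem_singleton] at hx
      rcases hx with rfl | rfl
      · exact h0_mem
      · exact ht_mem
    have hpair : ({0, t} : Finset ℕ).card = 2 := Finset.card_pair (by omega)
    have hsupp_eq : ({0, t} : Finset ℕ) = f.support :=
      Finset.eq_of_subset_of_card_le hsub (by omega)
    have hfeq : f = X ^ t + C (f.coeff 0) := by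
      ext k
      rw [coeff_add, coeff_X_pow, coeff_C]
      rcases eq_or_ne k t with rfl | hkt
      · rw [if_pos rfl, if_neg (by omega)]
        rw [hfmonic.coeff_natDegree]
        ring
      · rcases eq_or_ne k 0 with rfl | hk0
        · rw [if_neg (by omega), if_pos rfl]
          ring
        · have hk : k ∉ f.support := by
            rw [← hsupp_eq]
            simp only [Finset.mem_insert, Finset.mem_singleton]
            omega
          rw [notMem_support_iff.mp hk, if_neg (by omega), if_neg (by omega)]
          ring
    have hroot : α ^ t = algebraMap F Ω (-(f.coeff 0)) := by
      have h0 : (Polynomial.aeval α) f = 0 := minpoly.aeval F α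
      rw [hfeq] at h0
      simp only [map_add, map_pow, aeval_X, aeval_C] at h0
      rw [map_neg]
      linear_combination h0
    have hpow1 : α ^ (t * (Fintype.card F - 1)) = 1 := by
      rw [pow_mul, hroot, ← map_pow,
        FiniteField.pow_card_sub_one_eq_one _ (neg_ne_zero.mpr hb), map_one]
    have hdvd := (hα.pow_eq_one_iff_dvd _).mp hpow1
    rcases (Nat.Prime.dvd_mul hp).mp hdvd with h | h
    · have := Nat.le_of_dvd (by omega) h
      omega
    · exact h.trans (sub_one_dvd_sq_sub_one _ Fintype.card_pos)
  · -- trinomial case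
    have hc3 : f.support.card = 3 := le_antisymm hfsupp (by omega)
    have hsub : ({0, t} : Finset ℕ) ⊆ f.support := by
      intro x hx
      simp only [Finset.mem_insert, Finset.mem_singleton] at hx
      rcases hx with rfl | rfl
      · exact h0_mem
      · exact ht_mem
    have hss : ({0, t} : Finset ℕ) ⊂ f.support := by
      refine Finset.ssubset_iff_subset_ne.mpr ⟨hsub, ?_⟩
      intro h
      rw [← h, Finset.card_pair (by omega)] at hc3
      omega
    obtain ⟨e, he_mem, he_not⟩ := Finset.exists_of_ssubset hss
    simp only [Finset.mem_insert, Finset.mem_singleton, not_or] at he_not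
    obtain ⟨he0', het'⟩ := he_not
    have he0 : 0 < e := by omega
    have hele : e ≤ t := le_natDegree_of_mem_supp e he_mem
    have het : e < t := by omega
    set a := f.coeff e with hadef
    set b := f.coeff 0 with hbdef
    have ha : a ≠ 0 := mem_support_iff.mp he_mem
    have hsub3 : ({0, e, t} : Finset ℕ) ⊆ f.support := by
      intro x hx
      simp only [Finset.mem_insert, Finset.mem_singleton] at hx
      rcases hx with rfl | rfl | rfl
      · exact h0_mem
      · exact he_mem
      · exact ht_mem
    have hcard3 : ({0, e, t} : Finset ℕ).card = 3 := by
      rw [Finset.card_insert_of_notMem (by simp; omega),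
        Finset.card_insert_of_notMem (by simp; omega), Finset.card_singleton]
    have hsupp_eq : ({0, e, t} : Finset ℕ) = f.support :=
      Finset.eq_of_subset_of_card_le hsub3 (by omega)
    have hfeq : f = X ^ t + C a * X ^ e + C b := by
      ext k
      rw [coeff_add, coeff_add, coeff_X_pow, coeff_C_mul, coeff_X_pow, coeff_C]
      rcases eq_or_ne k t with rfl | hkt
      · rw [if_pos rfl, if_neg (by omega), if_neg (by omega), hfmonic.coeff_natDegree]
        ring
      · rcases eq_or_ne k e with rfl | hke
        · rw [if_neg (by omega), if_pos rfl, if_neg (by omega)]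
          ring
        · rcases eq_or_ne k 0 with rfl | hk0
          · rw [if_neg (by omega), if_neg (by omega), if_pos rfl]
            ring
          · have hk : k ∉ f.support := by
              rw [← hsupp_eq]
              simp only [Finset.mem_insert, Finset.mem_singleton]
              omega
            rw [notMem_support_iff.mp hk, if_neg (by omega), if_neg (by omega),
              if_neg (by omega)]
            ring
    have hroot0 : α ^ t + algebraMap F Ω a * α ^ e + algebraMap F Ω b = 0 := by
      have h0 : (Polynomial.aeval α) f = 0 := minpoly.aeval F α
      rw [hfeq] at h0
      simpa only [map_add, map_mul, map_pow, aeval_X, aeval_C] using h0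
    by_cases ht2e : t = 2 * e
    · -- quadratic in α^e : conclude via lemA
      have hcope : Nat.Coprime e p :=
        Nat.Coprime.symm (hp.coprime_iff_not_dvd.mpr (fun hdvd => by
          have := Nat.le_of_dvd he0 hdvd
          omega))
      have hβ : IsPrimitiveRoot (α ^ e) p := hα.pow_of_coprime e hcope
      have hβint : IsIntegral F (α ^ e) := hint.pow e
      have hq_root : (Polynomial.aeval (α ^ e)) (C 1 * X ^ 2 + C a * X + C b) = 0 := by
        simp only [map_add, map_mul, map_pow, aeval_X, aeval_C, map_one, one_mul]
        rw [← pow_mul, mul_comm e 2, ← ht2e]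
        linear_combination hroot0
      have hqdeg : (C 1 * X ^ 2 + C a * X + C b : F[X]).natDegree = 2 :=
        natDegree_quadratic (a := 1) (b := a) (c := b) one_ne_zero
      have hqne : (C 1 * X ^ 2 + C a * X + C b : F[X]) ≠ 0 := by
        intro h
        rw [h] at hqdeg
        simp at hqdeg
      have hdeg2 : (minpoly F (α ^ e)).natDegree ≤ 2 := by
        have := natDegree_le_of_dvd (minpoly.dvd F (α ^ e) hq_root) hqne
        rwa [hqdeg] at this
      exact lemA hp hβ hβint hdeg2
    · -- main contradiction case
      exfalso
      have hint2 : IsIntegral F (α ^ 2) := hint.pow 2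
      have hint3 : IsIntegral F (-α) := hint.neg
      set gP := minpoly F (α ^ 2) with hgdef
      have hα2p : (α ^ 2) ^ p = 1 := by
        rw [← pow_mul, mul_comm, pow_mul, hαp, one_pow]
      have hgdvdp : gP ∣ X ^ p - 1 := minpoly.dvd F (α ^ 2) (by simp [hα2p])
      have hgsupp : gP.support.card ≤ 3 := hsp gP (minpoly.irreducible hint2) hgdvdp
      have hgmonic : gP.Monic := minpoly.monic hint2
      -- degree of gP is t
      have hhalf : 2 * ((p + 1) / 2) = p + 1 := by
        obtain ⟨m, hm⟩ := hp.odd_of_ne_two hp2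
        omega
      have hαpow : (α ^ 2) ^ ((p + 1) / 2) = α := by
        rw [← pow_mul, hhalf, pow_succ, hαp, one_mul]
      have hmem1 : α ∈ F⟮α ^ 2⟯ := by
        have h2 := pow_mem (S := F⟮α ^ 2⟯)
          (IntermediateField.mem_adjoin_simple_self F (α ^ 2)) ((p + 1) / 2)
        rwa [hαpow] at h2
      have hmem2 : α ^ 2 ∈ F⟮α⟯ :=
        pow_mem (S := F⟮α⟯) (IntermediateField.mem_adjoin_simple_self F α) 2
      have hmem3 : α ∈ F⟮-α⟯ := by
        have h2 := neg_mem (s := F⟮-α⟯) (IntermediateField.mem_adjoin_simple_self F (-α))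
        rwa [neg_neg] at h2
      have hmem4 : -α ∈ F⟮α⟯ := neg_mem (s := F⟮α⟯) (IntermediateField.mem_adjoin_simple_self F α)
      have hdeg_g : gP.natDegree = t := minpoly_natDegree_eq hint2 hint hmem2 hmem1
      have hdeg_f2 : (minpoly F (-α)).natDegree = t := minpoly_natDegree_eq hint3 hint hmem4 hmem3
      have fdvd : f ∣ expand F 2 gP := minpoly.dvd F α (by
        rw [expand_aeval]
        exact minpoly.aeval F (α ^ 2))
      have f2dvd : minpoly F (-α) ∣ expand F 2 gP := minpoly.dvd F (-α) (by
        rw [expand_aeval, neg_sq]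
        exact minpoly.aeval F (α ^ 2))
      have hfne : f ≠ minpoly F (-α) := by
        intro h
        have hroot2 : (Polynomial.aeval (-α)) f = 0 := by rw [h]; exact minpoly.aeval F (-α)
        obtain ⟨u, hu⟩ := hfdvdp
        have h2 : (-α) ^ p - 1 = 0 := by
          have hc := congrArg (Polynomial.aeval (-α)) hu
          simp only [map_sub, map_pow, map_one, aeval_X, map_mul] at hc
          rw [hroot2, zero_mul] at hc
          exact hc
        rw [(hp.odd_of_ne_two hp2).neg_pow, hαp] at h2
        have h3 : ((2 : ℕ) : Ω) = 0 := by push_cast; linear_combination -h2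
        rw [CharP.cast_eq_zero_iff Ω r] at h3
        exact hrodd ((Nat.prime_dvd_prime_iff_eq hr Nat.prime_two).mp h3)
      have hcop : IsCoprime f (minpoly F (-α)) :=
        (hfirr.coprime_iff_not_dvd).mpr (fun hdvd => hfne (eq_of_monic_of_associated hfmonic
          (minpoly.monic hint3) (hfirr.associated_of_dvd (minpoly.irreducible hint3) hdvd)))
      have hmuldvd : f * minpoly F (-α) ∣ expand F 2 gP := hcop.mul_dvd fdvd f2dvd
      have hexp_monic : (expand F 2 gP).Monic := (monic_expand_iff two_pos).mpr hgmonic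
      have hPeq : expand F 2 gP = f * minpoly F (-α) := by
        refine (eq_of_dvd_of_natDegree_le_of_leadingCoeff hmuldvd ?_ ?_).symm
        · rw [natDegree_expand, natDegree_mul (minpoly.ne_zero hint) (minpoly.ne_zero hint3),
            hdeg_g, hdeg_f2, ← hfdef, ← htdef]
          omega
        · rw [(hfmonic.mul (minpoly.monic hint3)).leadingCoeff, hexp_monic.leadingCoeff]
      set a₂ := (-1 : F) ^ (t + e) * a with ha2def
      set b₂ := (-1 : F) ^ t * b with hb2def
      set Q : F[X] := X ^ t + C a₂ * X ^ e + C b₂ with hQdef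
      have hQcoeff_t : Q.coeff t = 1 := by
        rw [hQdef, coeff_add, coeff_add, coeff_X_pow, coeff_C_mul, coeff_X_pow, coeff_C,
          if_pos rfl, if_neg (by omega), if_neg (by omega)]
        ring
      have hQdeg_le : Q.natDegree ≤ t := by
        refine le_trans (natDegree_add_le _ _)
          (max_le (le_trans (natDegree_add_le _ _) (max_le ?_ ?_)) ?_)
        · simp [natDegree_X_pow]
        · exact le_trans (natDegree_C_mul_le _ _) (by rw [natDegree_X_pow]; exact het.le)
        · simp [natDegree_C]
      have hQroot : (Polynomial.aeval (-α)) Q = 0 := by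
        have hv : ((-1 : Ω)) ^ e * ((-1 : Ω)) ^ e = 1 := by
          rw [← pow_add]
          exact Even.neg_one_pow ⟨e, rfl⟩
        simp only [hQdef, ha2def, hb2def, map_add, map_mul, map_pow, aeval_X, aeval_C,
          map_neg, map_one]
        rw [neg_pow α t, neg_pow α e, pow_add]
        linear_combination ((-1 : Ω) ^ t) * hroot0
          + ((-1 : Ω) ^ t * algebraMap F Ω a * α ^ e) * hv
      have hQdeg : Q.natDegree = t :=
        le_antisymm hQdeg_le (le_natDegree_of_ne_zero (by rw [hQcoeff_t]; exact one_ne_zero))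
      have hf2eq : minpoly F (-α) = Q := by
        refine eq_of_dvd_of_natDegree_le_of_leadingCoeff (minpoly.dvd F (-α) hQroot) ?_ ?_
        · rw [hQdeg, hdeg_f2]
        · rw [(minpoly.monic hint3).leadingCoeff, Polynomial.leadingCoeff, hQdeg, hQcoeff_t]
      have hcoeff : ∀ k, (expand F 2 gP).coeff k =
          (if k = 2 * t then 1 else 0) + (if k = t + e then a + a₂ else 0)
          + (if k = t then b + b₂ else 0) + (if k = 2 * e then a * a₂ else 0)
          + (if k = e then a * b₂ + a₂ * b else 0) + (if k = 0 then b * b₂ else 0) := by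
        intro k
        rw [hPeq, hf2eq, hfeq, hQdef]
        exact trin_mul_coeff a b a₂ b₂ e t k
      have hsgn : ∀ m : ℕ, ((-1 : F)) ^ m ≠ 0 := fun m => pow_ne_zero m (by norm_num)
      obtain ⟨k0, hk0ne, hk0r⟩ : ∃ k0, (expand F 2 gP).coeff k0 ≠ 0 ∧
          (k0 = t ∨ k0 = e ∨ k0 = t + e) := by
        by_cases hbt : b + b₂ ≠ 0
        · refine ⟨t, ?_, Or.inl rfl⟩
          rw [hcoeff t, if_neg (by omega), if_neg (by omega), if_pos rfl, if_neg (by omega),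
            if_neg (by omega), if_neg (by omega)]
          simpa using hbt
        · by_cases hab : a * b₂ + a₂ * b ≠ 0
          · refine ⟨e, ?_, Or.inr (Or.inl rfl)⟩
            rw [hcoeff e, if_neg (by omega), if_neg (by omega), if_neg (by omega),
              if_neg (by omega), if_pos rfl, if_neg (by omega)]
            simpa using hab
          · refine ⟨t + e, ?_, Or.inr (Or.inr rfl)⟩
            rw [hcoeff (t + e), if_neg (by omega), if_pos rfl, if_neg (by omega),
              if_neg (by omega), if_neg (by omega), if_neg (by omega)]
            push_neg at hbt hab
            have hεt : ((-1 : F)) ^ t = -1 := by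
              have h' : b * (1 + (-1 : F) ^ t) = 0 := by
                rw [hb2def] at hbt; linear_combination hbt
              rcases mul_eq_zero.mp h' with h'' | h''
              · exact absurd h'' hb
              · linear_combination h''
            have hεs : ((-1 : F)) ^ (t + e) = 1 := by
              have h' : (a * b) * ((-1 : F) ^ t + (-1 : F) ^ (t + e)) = 0 := by
                rw [ha2def, hb2def] at hab; linear_combination hab
              rcases mul_eq_zero.mp h' with h'' | h''
              · rcases mul_eq_zero.mp h'' with h3 | h3
                · exact absurd h3 ha
                · exact absurd h3 hb
              · rw [hεt] at h''; linear_combination h''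
            rw [ha2def, hεs]
            intro hcon
            have h2a : (2 : F) * a = 0 := by linear_combination hcon
            rcases mul_eq_zero.mp h2a with h'' | h''
            · exact h2F h''
            · exact ha h''
      have hmemg : ∀ k, (expand F 2 gP).coeff k ≠ 0 → 2 ∣ k ∧ k / 2 ∈ gP.support := by
        intro k hk
        rw [coeff_expand two_pos] at hk
        by_cases h2k : 2 ∣ k
        · rw [if_pos h2k] at hk
          exact ⟨h2k, mem_support_iff.mpr hk⟩
        · rw [if_neg h2k] at hk
          exact absurd rfl hk
      obtain ⟨-, hm0⟩ := hmemg 0 (by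
        rw [hcoeff 0, if_neg (by omega), if_neg (by omega), if_neg (by omega),
          if_neg (by omega), if_neg (by omega), if_pos rfl]
        simp only [zero_add]
        rw [hb2def]
        exact mul_ne_zero hb (mul_ne_zero (hsgn t) hb))
      obtain ⟨-, hmt2⟩ := hmemg (2 * t) (by
        rw [hcoeff (2 * t), if_pos rfl, if_neg (by omega), if_neg (by omega),
          if_neg (by omega), if_neg (by omega), if_neg (by omega)]
        simp)
      obtain ⟨-, hme2⟩ := hmemg (2 * e) (by
        rw [hcoeff (2 * e), if_neg (by omega), if_neg (by omega), if_neg (by omega),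
          if_pos rfl, if_neg (by omega), if_neg (by omega)]
        simp only [zero_add, add_zero]
        rw [ha2def]
        exact mul_ne_zero ha (mul_ne_zero (hsgn _) ha))
      obtain ⟨hdvdk0, hmk0⟩ := hmemg k0 hk0ne
      have hm0' : 0 ∈ gP.support := by simpa using hm0
      have hmt' : t ∈ gP.support := by
        have h : 2 * t / 2 = t := by omega
        rwa [h] at hmt2
      have hme' : e ∈ gP.support := by
        have h : 2 * e / 2 = e := by omega
        rwa [h] at hme2
      have hdist : k0 / 2 ≠ 0 ∧ k0 / 2 ≠ e ∧ k0 / 2 ≠ t := by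
        obtain ⟨c, rfl⟩ := hdvdk0
        rcases hk0r with h | h | h <;> omega
      have hsub4 : ({0, e, t, k0 / 2} : Finset ℕ) ⊆ gP.support := by
        intro x hx
        simp only [Finset.mem_insert, Finset.mem_singleton] at hx
        rcases hx with rfl | rfl | rfl | rfl
        · exact hm0'
        · exact hme'
        · exact hmt'
        · exact hmk0
      have hcard4 : ({0, e, t, k0 / 2} : Finset ℕ).card = 4 := by
        rw [Finset.card_insert_of_notMem (by
            simp only [Finset.mem_insert, Finset.mem_singleton]; omega),
          Finset.card_insert_of_notMem (by
            simp only [Finset.mem_insert, Finset.mem_singleton]; omega),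
          Finset.card_insert_of_notMem (by simp only [Finset.mem_singleton]; omega),
          Finset.card_singleton]
      have hge4 := Finset.card_le_card hsub4
      rw [hcard4] at hge4
      omega

theorem X_pow_sub_one_three_sparse_necessity (F : Type*) [Field F] [Fintype F]
    (r : ℕ) (hr : r.Prime) (hrodd : r ≠ 2) (hchar : ringChar F = r)
    (n : ℕ) (hn : 0 < n) (hcop : ¬ r ∣ n)
    (hsparse : ∀ g : F[X], Irreducible g → g ∣ (X ^ n - 1 : F[X]) → g.support.card ≤ 3) :
    ∀ p : ℕ, p.Prime → p ∣ n → p ∣ Fintype.card F ^ 2 - 1 := by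
  intro p hp hpn
  haveI : CharP F r := hchar ▸ ringChar.charP F
  obtain ⟨k, -, hcard⟩ := FiniteField.card F r
  have hrodd' : Odd r := hr.odd_of_ne_two hrodd
  have hqodd : Odd (Fintype.card F) := by
    rw [hcard]
    exact hrodd'.pow
  by_cases hp2 : p = 2
  · subst hp2
    have hq2 : Odd (Fintype.card F ^ 2) := hqodd.pow
    obtain ⟨j, hj⟩ := hq2
    exact ⟨j, by omega⟩
  · have hpr : p ≠ r := fun h => hcop (h ▸ hpn)
    have hx : (X ^ p - 1 : F[X]) ∣ X ^ n - 1 := by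
      obtain ⟨c, rfl⟩ := hpn
      have := sub_dvd_pow_sub_pow ((X : F[X]) ^ p) 1 c
      simpa [← pow_mul, one_pow] using this
    exact core F r hr hrodd hchar p hp hp2 hpr
      (fun g hgi hgd => hsparse g hgi (hgd.trans hx))
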